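/- Let 𝔅 be a bicategory, let (X, Y) be a dual pair with X : B → A and Y : A → B (unit η : id_A → X ⊙ Y and counit ε : Y ⊙ X → id_B satisfying the triangle identities), and suppose that for every 0-cell D the precomposition functor (− ⊙ X) : 𝔅(A,D) → 𝔅(B,D) admits a right adjoint (X ▷ −) : 𝔅(B,D) → 𝔅(A,D). Then Y is canonically isomorphic to X ▷ id_B, and for every 1-cell Z : B → D the canonical 2-cell Z ⊙ (X ▷ id_B) → X ▷ Z (adjoint to the map (Z ⊙ (X ▷ id_B)) ⊙ X ≅ Z ⊙ ((X ▷ id_B) ⊙ X) → Z ⊙ id_B ≅ Z induced by the counit of the adjunction defining X ▷ −) is an isomorphism. -/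

import Mathlib

/-!
STATEMENT 6.  Let `𝔅` be a bicategory, `(X, Y)` a dual pair with `X : B → A` and `Y : A → B`
(unit `η : id_A → X ⊙ Y`, counit `ε : Y ⊙ X → id_B` satisfying the triangle identities, i.e.
a bicategorical adjunction `Y ⊣ X`), and suppose that for every 0-cell `D` the precomposition
functor `(− ⊙ X) : 𝔅(A,D) → 𝔅(B,D)` admits a right adjoint `(X ▷ −) : 𝔅(B,D) → 𝔅(A,D)`.
Then `Y` is canonically isomorphic to `X ▷ id_B` (the canonical map being the adjunct of the
counit `ε : X ⊙? ...` -- precisely, of `ε : (− ⊙ X)(Y) = X ≫ Y ⟶ 𝟙 B`), and for every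
1-cell `Z : B → D` the canonical 2-cell `Z ⊙ (X ▷ id_B) → X ▷ Z`, adjoint to
`(Z ⊙ (X ▷ id_B)) ⊙ X ≅ Z ⊙ ((X ▷ id_B) ⊙ X) → Z ⊙ id_B ≅ Z` (induced by the counit of
the adjunction defining `X ▷ −`), is an isomorphism.

Conventions: a paper 1-cell `M : A → B` is `M : a ⟶ b` in Lean and `L ⊙ M = M ≫ L`.
-/

open CategoryTheory CategoryTheory.Bicategory

universe w v u

variable {B : Type u} [Bicategory.{w, v} B]

/-- Precomposition `(− ⊙ M) : 𝔅(A,C) → 𝔅(B,C)` with `M : B → A`. -/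
@[simps]
def precompF {a b : B} (M : b ⟶ a) (c : B) : (a ⟶ c) ⥤ (b ⟶ c) where
  obj Z := M ≫ Z
  map θ := M ◁ θ

/-- A bicategorical adjunction `Y ⊣ X` induces `(X ≫ −) ⊣ (Y ≫ −)` on hom-categories. -/
def catAdj {a b : B} {X : b ⟶ a} {Y : a ⟶ b}
    (adj : Bicategory.Adjunction Y X) (d : B) :
    precompF X d ⊣ precompF Y d where
  unit :=
    { app := fun Z => (λ_ Z).inv ≫ adj.unit ▷ Z ≫ (α_ Y X Z).hom
      naturality := fun Z Z' θ => by
        dsimp [precompF]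
        simp only [leftUnitor_inv_naturality_assoc, whisker_exchange_assoc,
          associator_naturality_right, Category.assoc] }
  counit :=
    { app := fun W => (α_ X Y W).inv ≫ adj.counit ▷ W ≫ (λ_ W).hom
      naturality := fun W W' θ => by
        dsimp [precompF]
        simp only [associator_inv_naturality_right_assoc, whisker_exchange_assoc,
          leftUnitor_naturality, Category.assoc] }
  left_triangle_components := fun Z => by
    dsimp
    calc X ◁ ((λ_ Z).inv ≫ adj.unit ▷ Z ≫ (α_ Y X Z).hom) ≫
          (α_ X Y (X ≫ Z)).inv ≫ adj.counit ▷ (X ≫ Z) ≫ (λ_ (X ≫ Z)).hom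
        = 𝟙 (X ≫ Z) ⊗≫ rightZigzag adj.unit adj.counit ▷ Z ⊗≫ 𝟙 (X ≫ Z) := by
          bicategory
      _ = 𝟙 (X ≫ Z) := by rw [adj.right_triangle]; bicategory
  right_triangle_components := fun W => by
    dsimp
    calc ((λ_ (Y ≫ W)).inv ≫ adj.unit ▷ (Y ≫ W) ≫ (α_ Y X (Y ≫ W)).hom) ≫
          Y ◁ ((α_ X Y W).inv ≫ adj.counit ▷ W ≫ (λ_ W).hom)
        = 𝟙 (Y ≫ W) ⊗≫ leftZigzag adj.unit adj.counit ▷ W ⊗≫ 𝟙 (Y ≫ W) := by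
          bicategory
      _ = 𝟙 (Y ≫ W) := by rw [adj.left_triangle]; bicategory

/-- Transport of adjuncts along uniqueness of right adjoints. -/
theorem homEquiv_eq_homEquiv_comp {C : Type*} {D : Type*} [Category C] [Category D]
    {F : C ⥤ D} {G G' : D ⥤ C} (adj1 : F ⊣ G) (adj2 : F ⊣ G')
    (X : C) (Y : D) (f : F.obj X ⟶ Y) :
    adj1.homEquiv X Y f = adj2.homEquiv X Y f ≫
      (Adjunction.rightAdjointUniq adj2 adj1).hom.app Y := by
  rw [Adjunction.homEquiv_unit, Adjunction.homEquiv_unit, Category.assoc,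
    NatTrans.naturality, ← Category.assoc,
    Adjunction.unit_rightAdjointUniq_hom_app]

theorem counit_whisker_move {x y z : B} (X : y ⟶ x) {R S : x ⟶ y} (w : R ⟶ S)
    (c : X ≫ S ⟶ 𝟙 y) (Z : y ⟶ z) :
    (α_ X R Z).inv ≫ ((X ◁ w ≫ c) ▷ Z) ≫ (λ_ Z).hom
      = X ◁ (w ▷ Z) ≫ (α_ X S Z).inv ≫ (c ▷ Z) ≫ (λ_ Z).hom := by
  simp only [comp_whiskerRight, Category.assoc]
  rw [← associator_inv_naturality_middle_assoc]

theorem dualizable_dual_is_internal_hom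
    {a b : B} (X : b ⟶ a) (Y : a ⟶ b)
    (adj : Bicategory.Adjunction Y X)
    -- the closed structure: right adjoints `(X ▷ −)` for precomposition with `X`
    (rt : ∀ d : B, (b ⟶ d) ⥤ (a ⟶ d))
    (adjs : ∀ d : B, precompF X d ⊣ rt d) :
    -- (1) the canonical map `Y ⟶ X ▷ id_B`, the adjunct of the counit `ε : X ≫ Y ⟶ 𝟙 b`,
    -- is an isomorphism
    IsIso ((adjs b).homEquiv Y (𝟙 b) adj.counit) ∧
    -- (2) for every `Z : b ⟶ d`, the canonical 2-cell `Z ⊙ (X ▷ id_B) ⟶ X ▷ Z` is an iso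
    (∀ (d : B) (Z : b ⟶ d),
      IsIso ((adjs d).homEquiv ((rt b).obj (𝟙 b) ≫ Z) Z
        ((α_ X ((rt b).obj (𝟙 b)) Z).inv ≫ ((adjs b).counit.app (𝟙 b) ▷ Z) ≫ (λ_ Z).hom))) := by
  constructor
  · have h1 : (catAdj adj b).homEquiv Y (𝟙 b) adj.counit = (ρ_ Y).inv := by
      erw [Adjunction.homEquiv_unit]
      dsimp [catAdj]
      calc ((λ_ Y).inv ≫ adj.unit ▷ Y ≫ (α_ Y X Y).hom) ≫ Y ◁ adj.counit
          = 𝟙 Y ⊗≫ leftZigzag adj.unit adj.counit ⊗≫ 𝟙 (Y ≫ 𝟙 b) := by bicategory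
        _ = (ρ_ Y).inv := by rw [adj.left_triangle]; bicategory
    erw [homEquiv_eq_homEquiv_comp (adjs b) (catAdj adj b), h1]
    haveI := NatIso.hom_app_isIso ((catAdj adj b).rightAdjointUniq (adjs b)) (𝟙 b)
    exact @IsIso.comp_isIso _ _ _ _ _ _ _ (Iso.isIso_inv (ρ_ Y)) this
  · intro d Z
    set R : a ⟶ b := (rt b).obj (𝟙 b) with hR
    set w : R ⟶ Y ≫ 𝟙 b :=
      (Adjunction.rightAdjointUniq (adjs b) (catAdj adj b)).hom.app (𝟙 b) with hwdef
    have hw : (precompF X b).map w ≫ (catAdj adj b).counit.app (𝟙 b) =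
        (adjs b).counit.app (𝟙 b) :=
      Adjunction.rightAdjointUniq_hom_app_counit (adjs b) (catAdj adj b) (𝟙 b)
    have hφ : (α_ X R Z).inv ≫ ((adjs b).counit.app (𝟙 b) ▷ Z) ≫ (λ_ Z).hom
        = (precompF X d).map (w ▷ Z) ≫
          ((α_ X (Y ≫ 𝟙 b) Z).inv ≫ ((catAdj adj b).counit.app (𝟙 b) ▷ Z) ≫ (λ_ Z).hom) := by
      rw [← hw]
      exact counit_whisker_move X w ((catAdj adj b).counit.app (𝟙 b)) Z
    have h2 : (catAdj adj d).homEquiv ((Y ≫ 𝟙 b) ≫ Z) Z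
        ((α_ X (Y ≫ 𝟙 b) Z).inv ≫ ((catAdj adj b).counit.app (𝟙 b) ▷ Z) ≫ (λ_ Z).hom)
        = (α_ Y (𝟙 b) Z).hom ≫ Y ◁ (λ_ Z).hom := by
      rw [Adjunction.homEquiv_unit]
      dsimp [catAdj]
      calc ((λ_ ((Y ≫ 𝟙 b) ≫ Z)).inv ≫ adj.unit ▷ ((Y ≫ 𝟙 b) ≫ Z) ≫
              (α_ Y X ((Y ≫ 𝟙 b) ≫ Z)).hom) ≫
            Y ◁ ((α_ X (Y ≫ 𝟙 b) Z).inv ≫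
              (((α_ X Y (𝟙 b)).inv ≫ adj.counit ▷ 𝟙 b ≫ (λ_ (𝟙 b)).hom) ▷ Z) ≫ (λ_ Z).hom)
          = 𝟙 ((Y ≫ 𝟙 b) ≫ Z) ⊗≫ leftZigzag adj.unit adj.counit ▷ Z ⊗≫ 𝟙 (Y ≫ Z) := by
            bicategory
        _ = (α_ Y (𝟙 b) Z).hom ≫ Y ◁ (λ_ Z).hom := by rw [adj.left_triangle]; bicategory
    erw [homEquiv_eq_homEquiv_comp (adjs d) (catAdj adj d), hφ,
      Adjunction.homEquiv_naturality_left, h2]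
    haveI : IsIso w := NatIso.hom_app_isIso _ _
    haveI := NatIso.hom_app_isIso ((catAdj adj d).rightAdjointUniq (adjs d)) Z
    exact @IsIso.comp_isIso _ _ _ _ _ _ _ (@IsIso.comp_isIso _ _ _ _ _ _ _
      (Bicategory.whiskerRight_isIso w Z) (@IsIso.comp_isIso _ _ _ _ _ _ _
        (Iso.isIso_hom (α_ Y (𝟙 b) Z)) (Bicategory.whiskerLeft_isIso Y (λ_ Z).hom))) this
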